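/- Assume θ > 0, λ₁, λ₂, μ > 0, ϱ₁ = λ₁/μ < 1 and ϱ = (λ₁ + λ₂)/μ ≥ 1. Then there is no pair (λ_net, π) with λ_net ≥ 0 and π a stationary distribution of the free chain with parameters (λ₁, λ₂ + λ_net, μ, θ) such that Σ_{x∈ℕ²} x₂·π(x) < ∞ and λ_net = θ·Σ_{x∈ℕ²} x₂·π(x). -/

import Mathlib

open Filter Topology

/-- `π` is a stationary distribution of the free chain with parameters
`(l1, lt, mu, th)` (arrival rates `l1`, `lt`, service rate `mu`, mobility rate `th`). -/
def IsStationaryFree (l1 lt mu th : ℝ) (π : ℕ × ℕ → ℝ) : Prop :=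
  (∀ x, 0 ≤ π x) ∧ HasSum π 1 ∧
    ∀ x1 x2 : ℕ,
      π (x1, x2) * (l1 + lt + (if (x1, x2) ≠ ((0 : ℕ), (0 : ℕ)) then mu else 0)
          + th * (x2 : ℝ))
        = l1 * (if 1 ≤ x1 then π (x1 - 1, x2) else 0)
          + lt * (if 1 ≤ x2 then π (x1, x2 - 1) else 0)
          + mu * ((x1 : ℝ) + 1) / ((x1 : ℝ) + 1 + (x2 : ℝ)) * π (x1 + 1, x2)
          + (mu * ((x2 : ℝ) + 1) / ((x1 : ℝ) + (x2 : ℝ) + 1) + th * ((x2 : ℝ) + 1))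
              * π (x1, x2 + 1)

open Finset

private def diagEquiv : (Σ n : ℕ, Fin (n+1)) ≃ ℕ × ℕ where
  toFun x := ((x.2 : ℕ), x.1 - x.2)
  invFun p := ⟨p.1 + p.2, ⟨p.1, by omega⟩⟩
  left_inv := by
    rintro ⟨n, ⟨k, hk⟩⟩
    have h1 : k + (n - k) = n := by omega
    dsimp
    congr 1
    rw [Fin.heq_ext_iff (by rw [h1])]
  right_inv := by rintro ⟨a, b⟩; simp

private lemma hasSum_diag (f : ℕ × ℕ → ℝ) (a : ℝ) (hf : HasSum f a) :
    HasSum (fun n => ∑ k ∈ range (n+1), f (k, n - k)) a := by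
  have h1 : HasSum (f ∘ diagEquiv) a := (Equiv.hasSum_iff diagEquiv).2 hf
  refine h1.sigma fun n => ?_
  have := hasSum_fintype (fun k : Fin (n+1) => f (k, n - k))
  rw [Fin.sum_univ_eq_sum_range (fun k => f (k, n - k)) (n+1)] at this
  convert this using 2
  rfl

private noncomputable def Pl (π : ℕ × ℕ → ℝ) (n : ℕ) : ℝ :=
  ∑ k ∈ range (n+1), π (k, n - k)

private noncomputable def Sl (π : ℕ × ℕ → ℝ) (n : ℕ) : ℝ :=
  ∑ k ∈ range (n+1), ((n - k : ℕ) : ℝ) * π (k, n - k)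

section Level

variable (l1 lt mu th : ℝ) (π : ℕ × ℕ → ℝ)

private lemma level
    (hbal : ∀ x1 x2 : ℕ,
      π (x1, x2) * (l1 + lt + (if (x1, x2) ≠ ((0 : ℕ), (0 : ℕ)) then mu else 0)
          + th * (x2 : ℝ))
        = l1 * (if 1 ≤ x1 then π (x1 - 1, x2) else 0)
          + lt * (if 1 ≤ x2 then π (x1, x2 - 1) else 0)
          + mu * ((x1 : ℝ) + 1) / ((x1 : ℝ) + 1 + (x2 : ℝ)) * π (x1 + 1, x2)
          + (mu * ((x2 : ℝ) + 1) / ((x1 : ℝ) + (x2 : ℝ) + 1) + th * ((x2 : ℝ) + 1))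
              * π (x1, x2 + 1))
    (m : ℕ) (hm : 1 ≤ m) :
    (l1 + lt + mu) * Pl π m + th * Sl π m
      = (l1 + lt) * Pl π (m-1) + mu * Pl π (m+1) + th * Sl π (m+1) := by
  have hm1 : ((m:ℝ) + 1) ≠ 0 := by positivity
  have key : ∀ k ∈ range (m+1),
      π (k, m - k) * (l1 + lt + mu + th * ((m - k : ℕ) : ℝ))
      = l1 * (if 1 ≤ k then π (k - 1, m - k) else 0)
        + lt * (if 1 ≤ m - k then π (k, m - k - 1) else 0)
        + mu / ((m:ℝ)+1) * (((k:ℝ)+1) * π (k+1, m - k))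
        + mu / ((m:ℝ)+1) * ((((m:ℝ)-(k:ℝ))+1) * π (k, (m - k)+1))
        + th * ((((m:ℝ)-(k:ℝ))+1) * π (k, (m - k)+1)) := by
    intro k hk
    have hk' : k ≤ m := by have := mem_range.mp hk; omega
    have hc : ((m - k : ℕ) : ℝ) = (m:ℝ) - (k:ℝ) := by rw [Nat.cast_sub hk']
    have hne : ((k, m - k) : ℕ × ℕ) ≠ ((0:ℕ),(0:ℕ)) := by
      intro h
      rw [Prod.mk.injEq] at h
      omega
    have hb := hbal k (m - k)
    rw [if_pos hne, hc] at hb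
    rw [hc, hb]
    have hd1 : (k:ℝ) + 1 + ((m:ℝ) - (k:ℝ)) = (m:ℝ) + 1 := by ring
    have hd2 : (k:ℝ) + ((m:ℝ) - (k:ℝ)) + 1 = (m:ℝ) + 1 := by ring
    rw [hd1, hd2]
    ring
  have hsum := sum_congr rfl key
  have hL : ∑ k ∈ range (m+1), π (k, m - k) * (l1 + lt + mu + th * ((m - k : ℕ) : ℝ))
      = (l1 + lt + mu) * Pl π m + th * Sl π m := by
    simp only [Pl, Sl, mul_sum, ← sum_add_distrib]
    exact sum_congr rfl fun k hk => by ring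
  have hsum' := hL.symm.trans hsum
  rw [show (∑ k ∈ range (m+1),
      (l1 * (if 1 ≤ k then π (k - 1, m - k) else 0)
        + lt * (if 1 ≤ m - k then π (k, m - k - 1) else 0)
        + mu / ((m:ℝ)+1) * (((k:ℝ)+1) * π (k+1, m - k))
        + mu / ((m:ℝ)+1) * ((((m:ℝ)-(k:ℝ))+1) * π (k, (m - k)+1))
        + th * ((((m:ℝ)-(k:ℝ))+1) * π (k, (m - k)+1))))
      = (∑ k ∈ range (m+1), l1 * (if 1 ≤ k then π (k - 1, m - k) else 0))
        + (∑ k ∈ range (m+1), lt * (if 1 ≤ m - k then π (k, m - k - 1) else 0))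
        + (∑ k ∈ range (m+1), mu / ((m:ℝ)+1) * (((k:ℝ)+1) * π (k+1, m - k)))
        + (∑ k ∈ range (m+1), mu / ((m:ℝ)+1) * ((((m:ℝ)-(k:ℝ))+1) * π (k, (m - k)+1)))
        + (∑ k ∈ range (m+1), th * ((((m:ℝ)-(k:ℝ))+1) * π (k, (m - k)+1)))
      from by simp only [sum_add_distrib]] at hsum'
  -- evaluate each of the five sums
  have hA : ∑ k ∈ range (m+1), l1 * (if 1 ≤ k then π (k - 1, m - k) else 0)
      = l1 * Pl π (m-1) := by
    rw [← mul_sum]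
    congr 1
    simp only [Pl]
    rw [Finset.sum_range_succ' (fun k => if 1 ≤ k then π (k - 1, m - k) else 0) m]
    simp only [le_add_iff_nonneg_left, zero_le, if_true, Nat.add_sub_cancel,
      Nat.not_succ_le_zero, if_false, add_zero, Nat.le_zero]
    norm_num
    rw [show m - 1 + 1 = m from by omega]
    refine sum_congr rfl fun k hk => ?_
    rw [show m - (k+1) = m - 1 - k from by omega]
  have hB : ∑ k ∈ range (m+1), lt * (if 1 ≤ m - k then π (k, m - k - 1) else 0)
      = lt * Pl π (m-1) := by
    rw [← mul_sum]
    congr 1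
    simp only [Pl]
    rw [Finset.sum_range_succ (fun k => if 1 ≤ m - k then π (k, m - k - 1) else 0) m]
    rw [show m - m = 0 from by omega]
    norm_num
    rw [show m - 1 + 1 = m from by omega]
    refine sum_congr rfl fun k hk => ?_
    have hk' : k < m := mem_range.mp hk
    rw [if_pos (by omega : 1 ≤ m - k), show m - k - 1 = m - 1 - k from by omega]
  have hW : ∑ k ∈ range (m+1), (((m:ℝ)-(k:ℝ))+1) * π (k, (m - k)+1) = Sl π (m+1) := by
    have h2 : ∑ k ∈ range (m+1+1), ((m:ℝ) + 1 - (k:ℝ)) * π (k, (m+1) - k)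
        = ∑ k ∈ range (m+1), (((m:ℝ)-(k:ℝ))+1) * π (k, (m - k)+1) := by
      rw [Finset.sum_range_succ (fun k => ((m:ℝ) + 1 - (k:ℝ)) * π (k, (m+1) - k)) (m+1)]
      rw [show ((m:ℝ) + 1 - ((m+1 : ℕ):ℝ)) = 0 from by push_cast; ring]
      rw [zero_mul, add_zero]
      refine sum_congr rfl fun k hk => ?_
      have hk' : k ≤ m := by have := mem_range.mp hk; omega
      rw [show (m+1) - k = (m - k) + 1 from by omega]
      ring
    rw [← h2]
    simp only [Sl]
    refine (sum_congr rfl fun k hk => ?_).symm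
    have hk' : k ≤ m + 1 := by have := mem_range.mp hk; omega
    rw [Nat.cast_sub hk']
    push_cast
    ring
  have hT : ∑ k ∈ range (m+1), ((k:ℝ)+1) * π (k+1, m - k)
      = ∑ j ∈ range (m+1+1), (j:ℝ) * π (j, (m+1) - j) := by
    rw [Finset.sum_range_succ' (fun j => (j:ℝ) * π (j, (m+1) - j)) (m+1)]
    norm_num
    refine sum_congr rfl fun k hk => ?_
    rw [show m + 1 - (k+1) = m - k from by omega]
  have hPT : (∑ j ∈ range (m+1+1), (j:ℝ) * π (j, (m+1) - j)) + Sl π (m+1)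
      = ((m:ℝ)+1) * Pl π (m+1) := by
    simp only [Sl, Pl, mul_sum, ← sum_add_distrib]
    refine sum_congr rfl fun k hk => ?_
    have hk' : k ≤ m + 1 := by have := mem_range.mp hk; omega
    rw [Nat.cast_sub hk']
    push_cast
    ring
  have hC : ∑ k ∈ range (m+1), mu / ((m:ℝ)+1) * (((k:ℝ)+1) * π (k+1, m - k))
      = mu / ((m:ℝ)+1) * (∑ j ∈ range (m+1+1), (j:ℝ) * π (j, (m+1) - j)) := by
    rw [← mul_sum, hT]
  have hD : ∑ k ∈ range (m+1), mu / ((m:ℝ)+1) * ((((m:ℝ)-(k:ℝ))+1) * π (k, (m - k)+1))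
      = mu / ((m:ℝ)+1) * Sl π (m+1) := by
    rw [← mul_sum, hW]
  have hE : ∑ k ∈ range (m+1), th * ((((m:ℝ)-(k:ℝ))+1) * π (k, (m - k)+1))
      = th * Sl π (m+1) := by
    rw [← mul_sum, hW]
  rw [hA, hB, hC, hD, hE] at hsum'
  have hmu' : mu / ((m:ℝ)+1) * (∑ j ∈ range (m+1+1), (j:ℝ) * π (j, (m+1) - j))
      + mu / ((m:ℝ)+1) * Sl π (m+1) = mu * Pl π (m+1) := by
    rw [← mul_add, hPT]
    field_simp
  rw [hsum']
  linear_combination hmu'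

private lemma cut
    (hbal : ∀ x1 x2 : ℕ,
      π (x1, x2) * (l1 + lt + (if (x1, x2) ≠ ((0 : ℕ), (0 : ℕ)) then mu else 0)
          + th * (x2 : ℝ))
        = l1 * (if 1 ≤ x1 then π (x1 - 1, x2) else 0)
          + lt * (if 1 ≤ x2 then π (x1, x2 - 1) else 0)
          + mu * ((x1 : ℝ) + 1) / ((x1 : ℝ) + 1 + (x2 : ℝ)) * π (x1 + 1, x2)
          + (mu * ((x2 : ℝ) + 1) / ((x1 : ℝ) + (x2 : ℝ) + 1) + th * ((x2 : ℝ) + 1))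
              * π (x1, x2 + 1)) :
    ∀ n, (l1 + lt) * Pl π n = mu * Pl π (n+1) + th * Sl π (n+1) := by
  intro n
  induction n with
  | zero =>
    have hb := hbal 0 0
    norm_num at hb
    have e1 : Pl π 0 = π (0,0) := by simp [Pl]
    have e2 : Pl π 1 = π (0,1) + π (1,0) := by
      simp [Pl, Finset.sum_range_succ]
    have e3 : Sl π 1 = π (0,1) := by
      simp [Sl, Finset.sum_range_succ]
    show (l1 + lt) * Pl π 0 = mu * Pl π 1 + th * Sl π 1
    rw [e1, e2, e3]
    linarith [hb]
  | succ n ih =>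
    have h := level l1 lt mu th π hbal (n+1) (by omega)
    rw [show n + 1 - 1 = n from by omega] at h
    linarith [h, ih]

end Level

private lemma four_nonneg_zero {t1 t2 t3 t4 : ℝ} (h : 0 = t1 + t2 + t3 + t4)
    (h1 : 0 ≤ t1) (h2 : 0 ≤ t2) (h3 : 0 ≤ t3) (h4 : 0 ≤ t4) : t3 = 0 ∧ t4 = 0 := by
  constructor <;> linarith

private lemma zero_prop (l1 lt mu th : ℝ) (hl1 : 0 ≤ l1) (hlt : 0 ≤ lt)
    (hmu : 0 < mu) (hth : 0 ≤ th) (π : ℕ × ℕ → ℝ) (hpos : ∀ x, 0 ≤ π x)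
    (hbal : ∀ x1 x2 : ℕ,
      π (x1, x2) * (l1 + lt + (if (x1, x2) ≠ ((0 : ℕ), (0 : ℕ)) then mu else 0)
          + th * (x2 : ℝ))
        = l1 * (if 1 ≤ x1 then π (x1 - 1, x2) else 0)
          + lt * (if 1 ≤ x2 then π (x1, x2 - 1) else 0)
          + mu * ((x1 : ℝ) + 1) / ((x1 : ℝ) + 1 + (x2 : ℝ)) * π (x1 + 1, x2)
          + (mu * ((x2 : ℝ) + 1) / ((x1 : ℝ) + (x2 : ℝ) + 1) + th * ((x2 : ℝ) + 1))
              * π (x1, x2 + 1))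
    (h0 : π (0, 0) = 0) : ∀ p : ℕ × ℕ, π p = 0 := by
  have main : ∀ n, ∀ p : ℕ × ℕ, p.1 + p.2 = n → π p = 0 := by
    intro n
    induction n with
    | zero =>
      rintro ⟨a, b⟩ hab
      have hab' : a + b = 0 := hab
      have ha : a = 0 := by omega
      have hb : b = 0 := by omega
      subst ha; subst hb; exact h0
    | succ n ih =>
      rintro ⟨a, b⟩ hab
      have hab' : a + b = n + 1 := hab
      rcases Nat.eq_zero_or_pos a with ha | ha
      · subst ha
        have hb : b = n + 1 := by omega
        subst hb
        have hbl := hbal 0 n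
        have hz : π (0, n) = 0 := ih (0, n) (by show 0 + n = n; omega)
        rw [hz, zero_mul] at hbl
        obtain ⟨-, h4z⟩ := four_nonneg_zero hbl
          (mul_nonneg hl1 (by split_ifs with h <;> first | exact hpos _ | exact le_rfl))
          (mul_nonneg hlt (by split_ifs with h <;> first | exact hpos _ | exact le_rfl))
          (mul_nonneg (div_nonneg (mul_nonneg hmu.le (by positivity)) (by positivity)) (hpos _))
          (mul_nonneg (add_nonneg (div_nonneg (mul_nonneg hmu.le (by positivity)) (by positivity))
            (mul_nonneg hth (by positivity))) (hpos _))
        have hcpos : (0:ℝ) < mu * ((n:ℝ) + 1) / (((0:ℕ):ℝ) + (n:ℝ) + 1) + th * ((n:ℝ) + 1) := by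
          have hd : (0:ℝ) < mu * ((n:ℝ) + 1) / (((0:ℕ):ℝ) + (n:ℝ) + 1) :=
            div_pos (mul_pos hmu (by positivity)) (by positivity)
          have := mul_nonneg hth (show (0:ℝ) ≤ (n:ℝ) + 1 by positivity)
          linarith
        rcases mul_eq_zero.mp h4z with h | h
        · exact absurd h (ne_of_gt hcpos)
        · exact h
      · have hbl := hbal (a - 1) b
        have hz : π (a - 1, b) = 0 := ih (a - 1, b) (by show a - 1 + b = n; omega)
        rw [hz, zero_mul] at hbl
        obtain ⟨h3z, -⟩ := four_nonneg_zero hbl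
          (mul_nonneg hl1 (by split_ifs with h <;> first | exact hpos _ | exact le_rfl))
          (mul_nonneg hlt (by split_ifs with h <;> first | exact hpos _ | exact le_rfl))
          (mul_nonneg (div_nonneg (mul_nonneg hmu.le (by positivity)) (by positivity)) (hpos _))
          (mul_nonneg (add_nonneg (div_nonneg (mul_nonneg hmu.le (by positivity)) (by positivity))
            (mul_nonneg hth (by positivity))) (hpos _))
        have hcpos : (0:ℝ) < mu * (((a-1:ℕ):ℝ) + 1) / (((a-1:ℕ):ℝ) + 1 + (b:ℝ)) :=
          div_pos (mul_pos hmu (by positivity)) (by positivity)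
        have hπ : π (a - 1 + 1, b) = 0 := by
          rcases mul_eq_zero.mp h3z with h | h
          · exact absurd h (ne_of_gt hcpos)
          · exact h
        rw [show a - 1 + 1 = a from by omega] at hπ
        exact hπ
  exact fun p => main (p.1 + p.2) p rfl

/-- Lemma 2.2 (no solution): if ϱ₁ < 1 but ϱ ≥ 1 there is no pair (λ_net, π)
solving the fixed-point equation. -/
theorem no_fixed_point_solution_supercritical
    (l1 l2 mu th : ℝ) (hl1 : 0 < l1) (hl2 : 0 < l2) (hmu : 0 < mu) (hth : 0 < th)
    (hρ1 : l1 / mu < 1) (hρ : 1 ≤ (l1 + l2) / mu) :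
    ¬ ∃ (lnet : ℝ) (π : ℕ × ℕ → ℝ),
        0 ≤ lnet ∧ IsStationaryFree l1 (l2 + lnet) mu th π ∧
        Summable (fun x : ℕ × ℕ => (x.2 : ℝ) * π x) ∧
        lnet = th * ∑' x : ℕ × ℕ, (x.2 : ℝ) * π x := by
  rintro ⟨lnet, π, hlnet, ⟨hpos, hsum1, hbal⟩, hsummable, hfix⟩
  set S := ∑' x : ℕ × ℕ, (x.2 : ℝ) * π x with hSdef
  have hcut := cut l1 (l2 + lnet) mu th π hbal
  have hP : HasSum (Pl π) 1 := hasSum_diag π 1 hsum1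
  have hS0 : HasSum (fun x : ℕ × ℕ => (x.2 : ℝ) * π x) S := hsummable.hasSum
  have hSl : HasSum (Sl π) S := hasSum_diag (fun x : ℕ × ℕ => (x.2 : ℝ) * π x) S hS0
  have hP1 : HasSum (fun n => Pl π (n+1)) (1 - Pl π 0) := by
    rw [hasSum_nat_add_iff 1]
    simpa using hP
  have hSl0 : Sl π 0 = 0 := by simp [Sl]
  have hS1 : HasSum (fun n => Sl π (n+1)) S := by
    have : HasSum (fun n => Sl π (n+1)) (S - Sl π 0) := by
      rw [hasSum_nat_add_iff 1]
      simpa using hSl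
    simpa [hSl0] using this
  have htot : HasSum (fun n => mu * Pl π (n+1) + th * Sl π (n+1))
      (mu * (1 - Pl π 0) + th * S) := (hP1.mul_left mu).add (hS1.mul_left th)
  have hlhs : HasSum (fun n => (l1 + (l2 + lnet)) * Pl π n) ((l1 + (l2 + lnet)) * 1) :=
    hP.mul_left _
  have hkey : (l1 + (l2 + lnet)) * 1 = mu * (1 - Pl π 0) + th * S := by
    refine hlhs.unique ?_
    have heq : (fun n => (l1 + (l2 + lnet)) * Pl π n)
        = fun n => mu * Pl π (n+1) + th * Sl π (n+1) := funext hcut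
    rw [heq]
    exact htot
  have hP0 : Pl π 0 = π (0, 0) := by
    rw [Pl, Finset.sum_range_one]
  have hmuS : mu ≤ l1 + l2 := (one_le_div hmu).mp hρ
  rw [hP0] at hkey
  have hle : π (0, 0) ≤ 0 := by nlinarith [hkey, hfix, hmuS, hmu, hpos (0, 0)]
  have h0 : π (0, 0) = 0 := le_antisymm hle (hpos (0, 0))
  have hz := zero_prop l1 (l2 + lnet) mu th hl1.le (by linarith) hmu hth.le π hpos hbal h0
  have hzero : π = fun _ => 0 := funext fun p => hz p
  rw [hzero] at hsum1
  have h10 : (1:ℝ) = 0 := hsum1.unique hasSum_zero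
  norm_num at h10
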